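/- Let ν be a probability measure on a measurable space β, let C ≥ 0, and let κ be a Markov kernel from β to ℝ such that for every b ∈ β and all reals x ≤ y, κ(b)(Ioo x y) ≤ C·(y − x) (i.e., each κ(b) has a Lebesgue density bounded by C and no point masses). Let h, g : β → ℝ be measurable with g − h square-integrable with respect to ν. Then ∫ ((κ(b)(Ioi (h(b)))).toReal − (κ(b)(Ioi (g(b)))).toReal)² dν(b) ≤ C²·∫ (h(b) − g(b))² dν(b). -/

import Mathlib

open MeasureTheory ProbabilityTheory Set

lemma kernel_Ioc_bound {β : Type*} [MeasurableSpace β]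
    (C : ℝ) (κ : Kernel β ℝ)
    (hκ : ∀ b : β, ∀ x y : ℝ, x ≤ y → κ b (Ioo x y) ≤ ENNReal.ofReal (C * (y - x)))
    (b : β) (x y : ℝ) (hxy : x ≤ y) :
    κ b (Ioc x y) ≤ ENNReal.ofReal (C * (y - x)) := by
  have cont : Filter.Tendsto (fun ε : ℝ => ENNReal.ofReal (C * (y + ε - x)))
      (nhdsWithin (0:ℝ) (Ioi 0)) (nhds (ENNReal.ofReal (C * (y - x)))) := by
    apply Filter.Tendsto.mono_left _ nhdsWithin_le_nhds
    have hc : Continuous fun ε : ℝ => ENNReal.ofReal (C * (y + ε - x)) := by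
      exact ENNReal.continuous_ofReal.comp (by continuity)
    simpa using hc.tendsto 0
  refine ge_of_tendsto cont ?_
  filter_upwards [self_mem_nhdsWithin] with ε hε
  have hsub : Ioc x y ⊆ Ioo x (y + ε) := by
    intro t ht
    exact ⟨ht.1, lt_of_le_of_lt ht.2 (by simpa using hε)⟩
  exact le_trans (measure_mono hsub) (hκ b x (y + ε) (by simp at hε; linarith))

lemma toReal_Ioi_diff {β : Type*} [MeasurableSpace β]
    (κ : Kernel β ℝ) [IsMarkovKernel κ] (b : β) (x y : ℝ) (hxy : x ≤ y) :
    (κ b (Ioi x)).toReal - (κ b (Ioi y)).toReal = (κ b (Ioc x y)).toReal := by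
  have hunion : Ioc x y ∪ Ioi y = Ioi x := Ioc_union_Ioi_eq_Ioi hxy
  have hdisj : Disjoint (Ioc x y) (Ioi y) := Ioc_disjoint_Ioi le_rfl
  have := measure_union hdisj measurableSet_Ioi (μ := κ b)
  rw [hunion] at this
  rw [this, ENNReal.toReal_add (measure_ne_top _ _) (measure_ne_top _ _)]
  ring

/-- conditional indicator L² lemma, Lemma 8 of the appendix: if the
conditional distribution `κ b` of `A` given `B = b` satisfies `κ b (Ioo x y) ≤ C⬝(y - x)`
(density bounded by `C`, no point masses), then
`‖P(A > h(B) | B) - P(A > g(B) | B)‖_{L²(ν)} ≤ C⬝‖h - g‖_{L²(ν)}`. -/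
theorem conditional_indicator_L2_lemma
    {β : Type*} [MeasurableSpace β] (ν : Measure β) [IsProbabilityMeasure ν]
    (C : ℝ) (hC : 0 ≤ C) (κ : Kernel β ℝ) [IsMarkovKernel κ]
    (hκ : ∀ b : β, ∀ x y : ℝ, x ≤ y → κ b (Ioo x y) ≤ ENNReal.ofReal (C * (y - x)))
    (h g : β → ℝ) (hh : Measurable h) (hg : Measurable g)
    (hL2 : MemLp (fun b => g b - h b) 2 ν) :
    ∫ b, ((κ b (Ioi (h b))).toReal - (κ b (Ioi (g b))).toReal) ^ 2 ∂ν ≤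
      C ^ 2 * ∫ b, (h b - g b) ^ 2 ∂ν := by
  -- pointwise bound
  have key : ∀ x y : ℝ, x ≤ y → ∀ b,
      |(κ b (Ioi x)).toReal - (κ b (Ioi y)).toReal| ≤ C * (y - x) := by
    intro x y hxy b
    rw [toReal_Ioi_diff κ b x y hxy, abs_of_nonneg ENNReal.toReal_nonneg]
    have := kernel_Ioc_bound C κ hκ b x y hxy
    calc (κ b (Ioc x y)).toReal ≤ (ENNReal.ofReal (C * (y - x))).toReal :=
          ENNReal.toReal_mono (by simp) this
      _ = C * (y - x) := ENNReal.toReal_ofReal (mul_nonneg hC (by linarith))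
  have pw : ∀ b, ((κ b (Ioi (h b))).toReal - (κ b (Ioi (g b))).toReal) ^ 2 ≤
      C ^ 2 * (h b - g b) ^ 2 := by
    intro b
    have habs : |(κ b (Ioi (h b))).toReal - (κ b (Ioi (g b))).toReal| ≤ C * |h b - g b| := by
      rcases le_total (h b) (g b) with hle | hle
      · have hk := key (h b) (g b) hle b
        rw [abs_of_nonpos (by linarith : h b - g b ≤ 0)]
        linarith
      · have hk := key (g b) (h b) hle b
        rw [abs_sub_comm] at hk
        rw [abs_of_nonneg (by linarith : 0 ≤ h b - g b)]
        linarith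
    calc ((κ b (Ioi (h b))).toReal - (κ b (Ioi (g b))).toReal) ^ 2
        = |(κ b (Ioi (h b))).toReal - (κ b (Ioi (g b))).toReal| ^ 2 := (sq_abs _).symm
      _ ≤ (C * |h b - g b|) ^ 2 := by
          exact pow_le_pow_left₀ (abs_nonneg _) habs 2
      _ = C ^ 2 * (h b - g b) ^ 2 := by rw [mul_pow, sq_abs]
  -- integrability of the dominating function
  have hint : Integrable (fun b => C ^ 2 * (h b - g b) ^ 2) ν := by
    have h1 : Integrable (fun b => (g b - h b) ^ 2) ν := hL2.integrable_sq
    have h2 : Integrable (fun b => (h b - g b) ^ 2) ν := by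
      refine h1.congr (Filter.Eventually.of_forall fun b => ?_)
      ring
    exact h2.const_mul _
  calc ∫ b, ((κ b (Ioi (h b))).toReal - (κ b (Ioi (g b))).toReal) ^ 2 ∂ν
      ≤ ∫ b, C ^ 2 * (h b - g b) ^ 2 ∂ν := by
        refine integral_mono_of_nonneg (Filter.Eventually.of_forall fun b => sq_nonneg _)
          hint (Filter.Eventually.of_forall pw)
    _ = C ^ 2 * ∫ b, (h b - g b) ^ 2 ∂ν := integral_const_mul _ _
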